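/- Let x : Ω → ℝ^m and z_0, …, z_N : Ω → ℝ^n have square-integrable components, let b_0, …, b_N : Ω → ℝ take values in {0,1}, and assume that for each j the variable b_j is independent of the pair (x, z_j). Set p_j := E[b_j] and y := ∑_{j=0}^{N} b_j • z_j. Then the cross-covariance satisfies E[(x − E x)(y − E y)ᵀ] = ∑_{j=0}^{N} p_j · E[(x − E x)(z_j − E z_j)ᵀ]. -/

import Mathlib

open MeasureTheory ProbabilityTheory Finset

/-- The cross-covariance matrix `E[(u - E u)(w - E w)ᵀ]` of random vectors
`u : Ω → ℝ^m` and `w : Ω → ℝ^n`. -/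
noncomputable def crossCovMatrix {Ω : Type*} [MeasurableSpace Ω] (P : Measure Ω) {m n : ℕ}
    (u : Ω → EuclideanSpace ℝ (Fin m)) (w : Ω → EuclideanSpace ℝ (Fin n)) :
    Matrix (Fin m) (Fin n) ℝ :=
  Matrix.of fun i l =>
    ∫ ω, (u ω i - (∫ ω', u ω' ∂P) i) * (w ω l - (∫ ω', w ω' ∂P) l) ∂P

lemma integrable_of_components' {Ω : Type*} [MeasurableSpace Ω] (P : Measure Ω)
    {n : ℕ} {u : Ω → EuclideanSpace ℝ (Fin n)}
    (hu : Measurable u) (h : ∀ i, Integrable (fun ω => u ω i) P) :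
    Integrable u P := by
  refine Integrable.mono' (g := fun ω => ∑ i, |u ω i|)
    (integrable_finset_sum _ fun i _ => (h i).abs) hu.aestronglyMeasurable ?_
  filter_upwards with ω
  rw [EuclideanSpace.norm_eq]
  have h1 : ∑ i, ‖u ω i‖ ^ 2 ≤ (∑ i, ‖u ω i‖) ^ 2 :=
    Finset.sum_sq_le_sq_sum_of_nonneg fun i _ => norm_nonneg _
  calc Real.sqrt (∑ i, ‖u ω i‖ ^ 2) ≤ Real.sqrt ((∑ i, ‖u ω i‖) ^ 2) := Real.sqrt_le_sqrt h1
  _ = ∑ i, ‖u ω i‖ := Real.sqrt_sq (Finset.sum_nonneg fun i _ => norm_nonneg _)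
  _ = ∑ i, |u ω i| := by simp [Real.norm_eq_abs]

lemma integral_component' {Ω : Type*} [MeasurableSpace Ω] {P : Measure Ω}
    {n : ℕ} {u : Ω → EuclideanSpace ℝ (Fin n)} (hu : Integrable u P) (i : Fin n) :
    (∫ ω, u ω ∂P) i = ∫ ω, u ω i ∂P :=
  ((EuclideanSpace.proj i (𝕜 := ℝ)).integral_comp_comm hu).symm

/-- state–measurement cross-covariance, Lemma 4 of the paper: if each
`{0,1}`-valued indicator `b j` is independent of the pair `(x, z j)`, then, with
`p j = E[b j]` and `y = ∑_j b_j • z_j`,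
`E[(x - E x)(y - E y)ᵀ] = ∑_j p_j E[(x - E x)(z_j - E z_j)ᵀ]`. -/
theorem crossCovariance_delayed_measurement
    {Ω : Type*} [MeasurableSpace Ω] (P : Measure Ω) [IsProbabilityMeasure P]
    (m n N : ℕ)
    (x : Ω → EuclideanSpace ℝ (Fin m))
    (b : Fin (N + 1) → Ω → ℝ) (z : Fin (N + 1) → Ω → EuclideanSpace ℝ (Fin n))
    (hxmeas : Measurable x)
    (hbmeas : ∀ j, Measurable (b j))
    (hzmeas : ∀ j, Measurable (z j))
    (hval : ∀ j ω, b j ω = 0 ∨ b j ω = 1)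
    (hx2 : ∀ i, MemLp (fun ω => x ω i) 2 P)
    (hz2 : ∀ j i, MemLp (fun ω => z j ω i) 2 P)
    (hindep : ∀ j, IndepFun (b j) (fun ω => (x ω, z j ω)) P) :
    crossCovMatrix P x (fun ω => ∑ j : Fin (N + 1), b j ω • z j ω)
      = ∑ j : Fin (N + 1), (∫ ω, b j ω ∂P) • crossCovMatrix P x (z j) := by
  have hx1 : ∀ i, Integrable (fun ω => x ω i) P := fun i => (hx2 i).integrable one_le_two
  have hz1 : ∀ j i, Integrable (fun ω => z j ω i) P := fun j i => (hz2 j i).integrable one_le_two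
  have hb_bdd : ∀ j ω, ‖b j ω‖ ≤ 1 := by
    intro j ω; rcases hval j ω with h | h <;> simp [h]
  have hb1 : ∀ j, Integrable (b j) P :=
    fun j => (integrable_const (1 : ℝ)).mono' (hbmeas j).aestronglyMeasurable
      (Filter.Eventually.of_forall (hb_bdd j))
  have hmul : ∀ (f g : Ω → ℝ), MemLp f 2 P → MemLp g 2 P →
      Integrable (fun ω => f ω * g ω) P := by
    intro f g hf hg
    have h : (1 : ENNReal) / 1 = 1 / 2 + 1 / 2 := by
      rw [one_div_one, ENNReal.add_halves]
    exact (MemLp.smul (p := 2) (q := 2) (r := 1) hg hf).integrable le_rfl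
  have hxint : Integrable x P := integrable_of_components' P hxmeas hx1
  have hzint : ∀ j, Integrable (z j) P := fun j => integrable_of_components' P (hzmeas j) (hz1 j)
  set y : Ω → EuclideanSpace ℝ (Fin n) := fun ω => ∑ j : Fin (N + 1), b j ω • z j ω with hydef
  have hymeas : Measurable y := Finset.measurable_sum _ fun j _ => (hbmeas j).smul (hzmeas j)
  have hyapply : ∀ ω l, y ω l = ∑ j : Fin (N + 1), b j ω * z j ω l := by
    intro ω l
    exact (map_sum (EuclideanSpace.proj (𝕜 := ℝ) l) (fun j => b j ω • z j ω) Finset.univ).trans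
      (Finset.sum_congr rfl fun j _ => by simp)
  have hyl : ∀ l, Integrable (fun ω => y ω l) P := by
    intro l
    have h1 : ∀ j : Fin (N + 1), Integrable (fun ω => b j ω * z j ω l) P := fun j =>
      (hz1 j l).bdd_mul (hbmeas j).aestronglyMeasurable (Filter.Eventually.of_forall (hb_bdd j))
    exact (integrable_finset_sum _ fun j _ => h1 j).congr
      (Filter.Eventually.of_forall fun ω => (hyapply ω l).symm)
  have hyint : Integrable y P := integrable_of_components' P hymeas hyl
  have hEx : ∀ i, (∫ ω, x ω ∂P) i = ∫ ω, x ω i ∂P := integral_component' hxint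
  have hEz : ∀ j l, (∫ ω, z j ω ∂P) l = ∫ ω, z j ω l ∂P := fun j => integral_component' (hzint j)
  have hEy : ∀ l, (∫ ω, y ω ∂P) l = ∫ ω, y ω l ∂P := integral_component' hyint
  ext i l
  simp only [crossCovMatrix, Matrix.of_apply, Matrix.sum_apply, Matrix.smul_apply, smul_eq_mul,
    hEx, hEz, hEy]
  set cx := ∫ ω, x ω i ∂P with hcx
  set X : Ω → ℝ := fun ω => x ω i - cx with hXdef
  have hX2 : MemLp X 2 P := (hx2 i).sub (memLp_const cx)
  have hXint : Integrable X P := (hx1 i).sub (integrable_const cx)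
  have hXzero : ∫ ω, X ω ∂P = 0 := by
    rw [hXdef]
    rw [integral_sub (hx1 i) (integrable_const cx)]
    simp [hcx]
  have key : ∀ (g : Ω → ℝ) (c : ℝ), Integrable (fun ω => X ω * g ω) P →
      ∫ ω, X ω * (g ω - c) ∂P = ∫ ω, X ω * g ω ∂P := by
    intro g c hg
    have h : (fun ω => X ω * (g ω - c)) = fun ω => X ω * g ω - X ω * c := by
      funext ω; ring
    rw [h, integral_sub hg (hXint.mul_const c), integral_mul_const, hXzero, zero_mul, sub_zero]
  have hXz : ∀ j, Integrable (fun ω => X ω * z j ω l) P := fun j => hmul _ _ hX2 (hz2 j l)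
  have hbXz : ∀ j : Fin (N + 1), Integrable (fun ω => b j ω * (X ω * z j ω l)) P := fun j =>
    (hXz j).bdd_mul (hbmeas j).aestronglyMeasurable (Filter.Eventually.of_forall (hb_bdd j))
  have hI : ∀ j, IndepFun (b j) (fun ω => X ω * z j ω l) P := by
    intro j
    have hφ : Measurable
        (fun p : EuclideanSpace ℝ (Fin m) × EuclideanSpace ℝ (Fin n) =>
          (p.1 i - cx) * p.2 l) := by
      exact ((((EuclideanSpace.proj (𝕜 := ℝ) i).continuous.measurable).comp
        measurable_fst).sub measurable_const).mul
        (((EuclideanSpace.proj (𝕜 := ℝ) l).continuous.measurable).comp measurable_snd)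
    exact (hindep j).comp measurable_id hφ
  have hstep : ∀ j : Fin (N + 1), ∫ ω, b j ω * (X ω * z j ω l) ∂P
      = (∫ ω, b j ω ∂P) * ∫ ω, X ω * z j ω l ∂P := fun j =>
    (hI j).integral_mul_eq_mul_integral (hb1 j).aestronglyMeasurable (hXz j).aestronglyMeasurable
  have hXy : Integrable (fun ω => X ω * y ω l) P := by
    refine (integrable_finset_sum Finset.univ fun j _ => hbXz j).congr
      (Filter.Eventually.of_forall fun ω => ?_)
    show (∑ j : Fin (N + 1), b j ω * (X ω * z j ω l)) = X ω * y ω l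
    rw [hyapply, Finset.mul_sum]
    exact (Finset.sum_congr rfl fun j _ => by ring).symm
  calc ∫ ω, X ω * (y ω l - ∫ ω', y ω' l ∂P) ∂P
      = ∫ ω, X ω * y ω l ∂P := key _ _ hXy
    _ = ∫ ω, ∑ j : Fin (N + 1), b j ω * (X ω * z j ω l) ∂P := by
        refine integral_congr_ae (Filter.Eventually.of_forall fun ω => ?_)
        show X ω * y ω l = ∑ j : Fin (N + 1), b j ω * (X ω * z j ω l)
        rw [hyapply, Finset.mul_sum]
        exact Finset.sum_congr rfl fun j _ => by ring
    _ = ∑ j : Fin (N + 1), ∫ ω, b j ω * (X ω * z j ω l) ∂P :=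
        integral_finset_sum _ fun j _ => hbXz j
    _ = ∑ j : Fin (N + 1), (∫ ω, b j ω ∂P) * ∫ ω, X ω * (z j ω l - ∫ ω', z j ω' l ∂P) ∂P := by
        refine Finset.sum_congr rfl fun j _ => ?_
        rw [hstep j, key _ _ (hXz j)]
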